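/- Fix d ≥ 1. For each integer m ≥ 0, let C_m be a bijection from {0, 1, …, 2^{dm} − 1} to the set of dyadic closed subcubes of [0,1]^d of side length 2^{-m} (i.e., cubes of the form ∏_{i=1}^d [k_i 2^{-m}, (k_i+1) 2^{-m}] with integer k_i), and assume the nesting property: for every m ≥ 0 and every k ∈ {0, …, 2^{dm} − 1}, the cubes C_{m+1}(2^d k), C_{m+1}(2^d k + 1), …, C_{m+1}(2^d k + 2^d − 1) are exactly the 2^d dyadic subcubes of side length 2^{-(m+1)} contained in C_m(k). Then for every m ≥ 0 and every k ∈ {0, …, 2^{dm} − 2}, the union ⋃_{j=0}^{k} C_m(j) can be written as a union of at most 2^d (m + 1) closed axis-parallel hyperrectangles (in fact, of at most 2^d(m+1) dyadic cubes, fewer than 2^d of which are taken from each of the levels 0, 1, …, m). -/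

import Mathlib

open Set

noncomputable section

/-- The closed dyadic cube of level `m` with lower corner `(c i / 2^m)ᵢ`. -/
def dyadicCube (d m : ℕ) (c : Fin d → ℕ) : Set (Fin d → ℝ) :=
  Set.univ.pi fun i => Set.Icc ((c i : ℝ) / 2 ^ m) (((c i : ℝ) + 1) / 2 ^ m)

/-- `S` is a dyadic subcube of `[0,1]^d` of side length `2^{-m}`. -/
def IsDyadicCube (d m : ℕ) (S : Set (Fin d → ℝ)) : Prop :=
  ∃ c : Fin d → ℕ, (∀ i, c i < 2 ^ m) ∧ S = dyadicCube d m c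

lemma dyadic_rect {d m : ℕ} {S : Set (Fin d → ℝ)} (h : IsDyadicCube d m S) :
    ∃ a b : Fin d → ℝ, (∀ i, a i ≤ b i) ∧
      S = Set.univ.pi fun i => Set.Icc (a i) (b i) := by
  obtain ⟨c, _, rfl⟩ := h
  refine ⟨fun i => (c i : ℝ) / 2 ^ m, fun i => ((c i : ℝ) + 1) / 2 ^ m, fun i => ?_, rfl⟩
  have h2 : (0:ℝ) < 2 ^ m := by positivity
  rw [div_le_div_iff₀ h2 h2]
  nlinarith

lemma subcube_subset {d m : ℕ} {c c' : Fin d → ℕ}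
    (h : ∀ i, c' i = 2 * c i ∨ c' i = 2 * c i + 1) :
    dyadicCube d (m + 1) c' ⊆ dyadicCube d m c := by
  intro x hx
  intro i _
  have hx' := hx i (mem_univ i)
  simp only [Set.mem_Icc] at hx' ⊢
  have hm : (0:ℝ) < 2 ^ m := by positivity
  have h2 : (0:ℝ) < 2 ^ (m + 1) := by positivity
  have key : (2:ℝ) ^ (m + 1) = 2 ^ m * 2 := pow_succ 2 m
  constructor
  · rw [div_le_iff₀ hm]
    have h1 := hx'.1
    rw [div_le_iff₀ h2] at h1
    rcases h i with hc | hc <;> rw [hc] at h1 <;> push_cast at h1 ⊢ <;> nlinarith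
  · rw [le_div_iff₀ hm]
    have h1 := hx'.2
    rw [le_div_iff₀ h2] at h1
    rcases h i with hc | hc <;> rw [hc] at h1 <;> push_cast at h1 ⊢ <;> nlinarith

lemma dyadic_cover {d m : ℕ} {c : Fin d → ℕ} {x : Fin d → ℝ}
    (hx : x ∈ dyadicCube d m c) :
    ∃ c' : Fin d → ℕ, (∀ i, c' i = 2 * c i ∨ c' i = 2 * c i + 1) ∧
      x ∈ dyadicCube d (m + 1) c' := by
  refine ⟨fun i => if x i ≤ ((2 * c i : ℕ) + 1 : ℝ) / 2 ^ (m + 1) then 2 * c i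
    else 2 * c i + 1, fun i => by dsimp only; split <;> simp, ?_⟩
  intro i _
  have hx' := hx i (mem_univ i)
  simp only [Set.mem_Icc] at hx' ⊢
  have hm : (0:ℝ) < 2 ^ m := by positivity
  have h2 : (0:ℝ) < 2 ^ (m + 1) := by positivity
  have key : (2:ℝ) ^ (m + 1) = 2 ^ m * 2 := pow_succ 2 m
  have hl := hx'.1; have hr := hx'.2
  rw [div_le_iff₀ hm] at hl
  rw [le_div_iff₀ hm] at hr
  split
  · rename_i hsp
    rw [le_div_iff₀ h2] at hsp
    constructor
    · rw [div_le_iff₀ h2]; push_cast at hsp ⊢; nlinarith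
    · rw [le_div_iff₀ h2]; push_cast at hsp ⊢; nlinarith
  · rename_i hsp
    push_neg at hsp
    rw [div_lt_iff₀ h2] at hsp
    constructor
    · rw [div_le_iff₀ h2]; push_cast at hsp ⊢; nlinarith
    · rw [le_div_iff₀ h2]; push_cast at hsp ⊢; nlinarith

lemma range_mul_biUnion {α : Type*} (q e : ℕ) (he : 0 < e) (f : ℕ → Set α) :
    (⋃ j ∈ Finset.range (e * q), f j) =
      ⋃ k ∈ Finset.range q, ⋃ i ∈ Finset.range e, f (e * k + i) := by
  ext x
  simp only [Set.mem_iUnion, Finset.mem_range, exists_prop]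
  constructor
  · rintro ⟨j, hj, hxj⟩
    refine ⟨j / e, ?_, j % e, Nat.mod_lt _ he, ?_⟩
    · exact Nat.div_lt_of_lt_mul (mul_comm e q ▸ hj)
    · rwa [Nat.div_add_mod]
  · rintro ⟨k, hk, i, hi, hxj⟩
    refine ⟨e * k + i, ?_, hxj⟩
    have h1 : e * k + i < e * (k + 1) := by rw [Nat.mul_succ]; exact Nat.add_lt_add_left hi _
    exact lt_of_lt_of_le h1 (Nat.mul_le_mul_left e hk)

/-- combinatorial form of Lemma B.1: if, for every level `m`,
`C m` is a bijection from `{0, …, 2^{dm} − 1}` onto the dyadic subcubes of `[0,1]^d`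
of side `2^{-m}` satisfying the nesting property (the children `C (m+1) (2^d k + i)`,
`i < 2^d`, are exactly the dyadic subcubes of `C m k`), then each prefix union
`⋃_{j ≤ k} C m j` (with `k ≤ 2^{dm} − 2`) is a union of at most `2^d (m+1)` closed
axis-parallel hyperrectangles. -/
theorem hilbert_prefix_union_hyperrectangles
    {d : ℕ} (hd : 1 ≤ d)
    (C : ℕ → ℕ → Set (Fin d → ℝ))
    (hcube : ∀ m, ∀ k < 2 ^ (d * m), IsDyadicCube d m (C m k))
    (hinj : ∀ m, ∀ k < 2 ^ (d * m), ∀ k' < 2 ^ (d * m), C m k = C m k' → k = k')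
    (hsurj : ∀ m, ∀ S, IsDyadicCube d m S → ∃ k < 2 ^ (d * m), C m k = S)
    (hnest : ∀ m, ∀ k < 2 ^ (d * m),
      {S | ∃ i < 2 ^ d, S = C (m + 1) (2 ^ d * k + i)} =
      {S | IsDyadicCube d (m + 1) S ∧ S ⊆ C m k}) :
    ∀ m k, k + 2 ≤ 2 ^ (d * m) →
      ∃ (p : ℕ) (R : Fin p → Set (Fin d → ℝ)), p ≤ 2 ^ d * (m + 1) ∧
        (∀ j, ∃ a b : Fin d → ℝ, (∀ i, a i ≤ b i) ∧
          R j = Set.univ.pi fun i => Set.Icc (a i) (b i)) ∧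
        (⋃ j ∈ Finset.range (k + 1), C m j) = ⋃ j, R j := by
  classical
  -- children of a cube cover it
  have children : ∀ m, ∀ k < 2 ^ (d * m),
      (⋃ i ∈ Finset.range (2 ^ d), C (m + 1) (2 ^ d * k + i)) = C m k := by
    intro m k hk
    apply Set.Subset.antisymm
    · refine Set.iUnion₂_subset fun i hi => ?_
      have hmem : C (m + 1) (2 ^ d * k + i) ∈
          {S | ∃ i < 2 ^ d, S = C (m + 1) (2 ^ d * k + i)} :=
        ⟨i, Finset.mem_range.mp hi, rfl⟩
      rw [hnest m k hk] at hmem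
      exact hmem.2
    · intro x hx
      obtain ⟨c, hc, hCeq⟩ := hcube m k hk
      rw [hCeq] at hx
      obtain ⟨c', hc', hmem⟩ := dyadic_cover hx
      have hS : IsDyadicCube d (m + 1) (dyadicCube d (m + 1) c') := by
        refine ⟨c', fun i => ?_, rfl⟩
        have := hc i
        have h2 : (2:ℕ) ^ (m + 1) = 2 * 2 ^ m := by rw [pow_succ]; ring
        rcases hc' i with h | h <;> omega
      have hin : dyadicCube d (m + 1) c' ∈
          {S | IsDyadicCube d (m + 1) S ∧ S ⊆ C m k} :=
        ⟨hS, hCeq ▸ subcube_subset hc'⟩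
      rw [← hnest m k hk] at hin
      obtain ⟨i, hi, hSeq⟩ := hin
      exact Set.mem_biUnion (Finset.mem_range.mpr hi) (hSeq ▸ hmem)
  -- main induction: any prefix of length `N ≤ 2^{dm}` is a union of
  -- at most `2^d m + 1` dyadic cubes
  have aux : ∀ m, ∀ N ≤ 2 ^ (d * m),
      ∃ F : Finset (Set (Fin d → ℝ)), F.card ≤ 2 ^ d * m + 1 ∧
        (∀ S ∈ F, ∃ a b : Fin d → ℝ, (∀ i, a i ≤ b i) ∧
          S = Set.univ.pi fun i => Set.Icc (a i) (b i)) ∧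
        (⋃ j ∈ Finset.range N, C m j) = ⋃ S ∈ F, S := by
    intro m
    induction m with
    | zero =>
      intro N hN
      simp only [Nat.mul_zero, pow_zero] at hN
      interval_cases N
      · exact ⟨∅, by simp, by simp, by simp⟩
      · refine ⟨{C 0 0}, by simp, ?_, by simp⟩
        intro S hS
        rw [Finset.mem_singleton] at hS
        subst hS
        exact dyadic_rect (hcube 0 0 (by simp))
    | succ m ih =>
      intro N hN
      set q := N / 2 ^ d with hq_def
      set r := N % 2 ^ d with hr_def
      have hepos : 0 < 2 ^ d := by positivity
      have hN' : 2 ^ d * q + r = N := Nat.div_add_mod N (2 ^ d)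
      have hrlt : r < 2 ^ d := Nat.mod_lt _ hepos
      have hpow : 2 ^ (d * (m + 1)) = 2 ^ (d * m) * 2 ^ d := by
        rw [← pow_add]; ring_nf
      have hq : q ≤ 2 ^ (d * m) := by
        calc q ≤ 2 ^ (d * (m + 1)) / 2 ^ d := Nat.div_le_div_right hN
          _ = 2 ^ (d * m) := by rw [hpow, Nat.mul_div_cancel _ hepos]
      obtain ⟨F, hcard, hrect, hU⟩ := ih q hq
      refine ⟨F ∪ (Finset.range r).image (fun i => C (m + 1) (2 ^ d * q + i)), ?_, ?_, ?_⟩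
      · calc (F ∪ (Finset.range r).image fun i => C (m + 1) (2 ^ d * q + i)).card
            ≤ F.card + ((Finset.range r).image fun i => C (m + 1) (2 ^ d * q + i)).card :=
              Finset.card_union_le _ _
          _ ≤ (2 ^ d * m + 1) + r := by
              have := Finset.card_image_le (s := Finset.range r)
                (f := fun i => C (m + 1) (2 ^ d * q + i))
              rw [Finset.card_range] at this
              omega
          _ ≤ 2 ^ d * (m + 1) + 1 := by
              have : 2 ^ d * (m + 1) = 2 ^ d * m + 2 ^ d := by ring
              omega
      · intro S hS
        rcases Finset.mem_union.mp hS with h | h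
        · exact hrect S h
        · obtain ⟨i, hi, rfl⟩ := Finset.mem_image.mp h
          rw [Finset.mem_range] at hi
          have hidx : 2 ^ d * q + i < 2 ^ (d * (m + 1)) := by
            have : 2 ^ d * q + i < N := by omega
            omega
          exact dyadic_rect (hcube (m + 1) _ hidx)
      · have split : (⋃ j ∈ Finset.range N, C (m + 1) j) =
            (⋃ j ∈ Finset.range (2 ^ d * q), C (m + 1) j) ∪
            (⋃ i ∈ Finset.range r, C (m + 1) (2 ^ d * q + i)) := by
          ext x
          simp only [Set.mem_union, Set.mem_iUnion, Finset.mem_range, exists_prop]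
          constructor
          · rintro ⟨j, hj, hxj⟩
            by_cases hcase : j < 2 ^ d * q
            · exact Or.inl ⟨j, hcase, hxj⟩
            · push_neg at hcase
              refine Or.inr ⟨j - 2 ^ d * q, by omega, ?_⟩
              rwa [Nat.add_sub_cancel' hcase]
          · rintro (⟨j, hj, hxj⟩ | ⟨i, hi, hxj⟩)
            · exact ⟨j, by omega, hxj⟩
            · exact ⟨2 ^ d * q + i, by omega, hxj⟩
        have first : (⋃ j ∈ Finset.range (2 ^ d * q), C (m + 1) j) =
            ⋃ k ∈ Finset.range q, C m k := by
          rw [range_mul_biUnion q (2 ^ d) hepos]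
          apply Set.iUnion₂_congr
          intro k hk
          exact children m k (lt_of_lt_of_le (Finset.mem_range.mp hk) hq)
        rw [split, first, hU]
        ext x
        simp only [Set.mem_union, Set.mem_iUnion, Finset.mem_union, Finset.mem_image,
          Finset.mem_range, exists_prop]
        constructor
        · rintro (⟨S, hS, hxS⟩ | ⟨i, hi, hxi⟩)
          · exact ⟨S, Or.inl hS, hxS⟩
          · exact ⟨_, Or.inr ⟨i, hi, rfl⟩, hxi⟩
        · rintro ⟨S, hS | ⟨i, hi, rfl⟩, hxS⟩
          · exact Or.inl ⟨S, hS, hxS⟩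
          · exact Or.inr ⟨i, hi, hxS⟩
  intro m k hk
  obtain ⟨F, hcard, hrect, hU⟩ := aux m (k + 1) (by omega)
  have hone : 1 ≤ 2 ^ d := Nat.one_le_two_pow
  refine ⟨F.card, fun j => ((F.equivFin.symm j : F) : Set (Fin d → ℝ)), ?_, ?_, ?_⟩
  · have : 2 ^ d * (m + 1) = 2 ^ d * m + 2 ^ d := by ring
    omega
  · intro j
    exact hrect _ (F.equivFin.symm j).2
  · rw [hU]
    ext x
    simp only [Set.mem_iUnion, exists_prop]
    constructor
    · rintro ⟨S, hS, hxS⟩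
      refine ⟨F.equivFin ⟨S, hS⟩, ?_⟩
      rw [Equiv.symm_apply_apply]
      exact hxS
    · rintro ⟨j, hj⟩
      exact ⟨_, (F.equivFin.symm j).2, hj⟩
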